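/- Let s, t, B be real numbers with 0 < s ≤ 1, t ≥ 0, B > 0, and let (A_n) and (b_n) be sequences of real numbers. Define b₊ = 0 if s < 1 and b₊ = t if s = 1, and assume c = lim_{n→∞} A_n − b₊ exists, is finite, and c > 0. If there is n₀ such that for all n ≥ n₀ one has b_{n+1} ≤ b_n (1 − A_n/n^s) + B/n^{s+t}, then limsup_{n→∞} n^t · b_n ≤ B/c. -/

import Mathlib

open Filter Real Finset Topology

private lemma exp_sub_one_le_mul (y : ℝ) (hy : 0 ≤ y) :
    Real.exp y - 1 ≤ y * Real.exp y := by
  have key : Real.exp (-y) * Real.exp y = 1 := by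
    rw [← Real.exp_add]; simp
  nlinarith [mul_le_mul_of_nonneg_right (Real.add_one_le_exp (-y)) (Real.exp_pos y).le]

set_option maxHeartbeats 1000000 in
/-- Chung's lemma (Fabian's formulation), upper-bound version:
if `b_{n+1} ≤ b_n (1 - A_n / n^s) + B / n^{s+t}` eventually, with
`A_n - b₊ → c > 0` (where `b₊ = t` if `s = 1` and `b₊ = 0` otherwise),
then `limsup n^t b_n ≤ B / c`. -/
theorem chung_lemma_limsup (s t B c : ℝ) (hs0 : 0 < s) (hs1 : s ≤ 1)
    (ht : 0 ≤ t) (hB : 0 < B) (A b : ℕ → ℝ)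
    (hc : Filter.Tendsto (fun n => A n - (if s = 1 then t else 0))
      Filter.atTop (nhds c))
    (hcpos : 0 < c)
    (hrec : ∃ n₀ : ℕ, ∀ n ≥ n₀,
      b (n + 1) ≤ b n * (1 - A n / (n : ℝ) ^ s) + B / (n : ℝ) ^ (s + t)) :
    Filter.limsup (fun n : ℕ => (n : ℝ) ^ t * b n) Filter.atTop ≤ B / c := by
  obtain ⟨n₀, hrec⟩ := hrec
  set bp : ℝ := if s = 1 then t else 0 with hbp
  have hbp0 : 0 ≤ bp := by rw [hbp]; split <;> simp [ht]
  have hA : Tendsto A atTop (𝓝 (c + bp)) := by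
    have h := hc.add_const bp
    simpa using h
  set p : ℕ → ℝ := fun n => (((n : ℝ) + 1) / n) ^ t with hpdef
  -- limit of p
  have hp1 : Tendsto p atTop (𝓝 1) := by
    have h0 : Tendsto (fun n : ℕ => 1 + 1 / (n : ℝ)) atTop (𝓝 1) := by
      simpa using (tendsto_const_div_atTop_nhds_zero_nat (1:ℝ)).const_add (1:ℝ)
    have h1 : Tendsto (fun n : ℕ => (1 + 1 / (n : ℝ)) ^ t) atTop (𝓝 1) := by
      simpa using h0.rpow_const (Or.inl one_ne_zero)
    apply h1.congr'
    filter_upwards [eventually_ge_atTop 1] with n hn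
    have hn0 : (n : ℝ) ≠ 0 := Nat.cast_ne_zero.mpr (by omega)
    rw [hpdef]
    congr 1
    field_simp
  -- pointwise bound : n^s (p n - 1) ≤ t n^{s-1} exp(t/n)
  have hpt_bound : ∀ n : ℕ, 1 ≤ n →
      (n : ℝ) ^ s * (p n - 1) ≤ t * (n : ℝ) ^ (s - 1) * Real.exp (t / n) := by
    intro n hn
    have hn0 : (0 : ℝ) < n := by exact_mod_cast hn
    have hx : (0 : ℝ) < 1 + 1 / n := by positivity
    have hp_eq : p n = (1 + 1 / (n : ℝ)) ^ t := by
      rw [hpdef]; congr 1; field_simp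
    have h1 : (1 + 1 / (n : ℝ)) ^ t ≤ Real.exp (t / n) := by
      rw [Real.rpow_def_of_pos hx]
      apply Real.exp_le_exp.2
      have hlog : Real.log (1 + 1 / n) ≤ 1 / n := by
        have := Real.log_le_sub_one_of_pos hx; linarith
      have hlog0 : 0 ≤ Real.log (1 + 1 / n) := by
        apply Real.log_nonneg; have : 0 < 1 / (n : ℝ) := by positivity
        linarith
      calc Real.log (1 + 1 / n) * t ≤ (1 / n) * t :=
            mul_le_mul_of_nonneg_right hlog ht
        _ = t / n := by ring
    have h2 : Real.exp (t / n) - 1 ≤ (t / n) * Real.exp (t / n) :=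
      exp_sub_one_le_mul _ (by positivity)
    have h3 : p n - 1 ≤ (t / n) * Real.exp (t / n) := by
      rw [hp_eq]; linarith
    have h4 : (n : ℝ) ^ s * (p n - 1) ≤ (n : ℝ) ^ s * ((t / n) * Real.exp (t / n)) :=
      mul_le_mul_of_nonneg_left h3 (Real.rpow_nonneg hn0.le s)
    have hrw : (n : ℝ) ^ s * ((t / n) * Real.exp (t / n))
        = t * (n : ℝ) ^ (s - 1) * Real.exp (t / n) := by
      rw [Real.rpow_sub hn0, Real.rpow_one]
      field_simp
    linarith [hrw ▸ h4]
  -- exp(t/n) → 1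
  have he1 : Tendsto (fun n : ℕ => Real.exp (t / n)) atTop (𝓝 1) := by
    have := (Real.continuous_exp.tendsto 0).comp (tendsto_const_div_atTop_nhds_zero_nat t)
    simpa [Function.comp_def] using this
  -- g → bp
  have hgl : Tendsto (fun n : ℕ => t * (n : ℝ) ^ (s - 1) * Real.exp (t / n)) atTop (𝓝 bp) := by
    by_cases hs : s = 1
    · have : Tendsto (fun n : ℕ => t * Real.exp (t / n)) atTop (𝓝 (t * 1)) :=
        he1.const_mul t
      apply Tendsto.congr' _ (by simpa [hbp, hs] using this)
      filter_upwards with n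
      simp [hs]
    · have hpow : Tendsto (fun n : ℕ => (n : ℝ) ^ (s - 1)) atTop (𝓝 0) := by
        have h := (tendsto_rpow_neg_atTop (y := 1 - s) (by cases lt_or_eq_of_le hs1 with
          | inl h => linarith
          | inr h => exact absurd h hs)).comp tendsto_natCast_atTop_atTop
        simpa [neg_sub, Function.comp_def] using h
      have : Tendsto (fun n : ℕ => t * (n : ℝ) ^ (s - 1) * Real.exp (t / n)) atTop
          (𝓝 (t * 0 * 1)) := ((hpow.const_mul t).mul he1)
      simpa [hbp, hs] using this
  -- A n / n^s → 0
  have hdiv0 : Tendsto (fun n : ℕ => A n / (n : ℝ) ^ s) atTop (𝓝 0) := by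
    have hinv : Tendsto (fun n : ℕ => ((n : ℝ) ^ s)⁻¹) atTop (𝓝 0) :=
      Tendsto.inv_tendsto_atTop ((tendsto_rpow_atTop hs0).comp tendsto_natCast_atTop_atTop)
    have := hA.mul hinv
    simpa [div_eq_mul_inv] using this
  -- key claim
  have key : ∀ L : ℝ, B / c < L → ∀ᶠ n : ℕ in atTop, (n : ℝ) ^ t * b n ≤ L := by
    intro L hL
    have hBc : 0 < B / c := div_pos hB hcpos
    set K₁ : ℝ := (B / c + L) / 2 with hK₁
    have hK₁l : B / c < K₁ := by rw [hK₁]; linarith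
    have hK₁r : K₁ < L := by rw [hK₁]; linarith
    have hK₁0 : 0 < K₁ := lt_trans hBc hK₁l
    set γ : ℝ := B / K₁ with hγ
    have hγ0 : 0 < γ := div_pos hB hK₁0
    have hγc : γ < c := by
      rw [hγ, div_lt_iff₀ hK₁0]
      rw [div_lt_iff₀ hcpos] at hK₁l
      linarith
    set K : ℝ := (K₁ + L) / 2 with hK
    have hK₁K : K₁ < K := by rw [hK]; linarith
    have hKL : K < L := by rw [hK]; linarith
    have hK0 : 0 < K := lt_trans hK₁0 hK₁K
    have hK₁γ : K₁ * γ = B := by rw [hγ]; field_simp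
    have hBB' : B < K * γ := by
      rw [← hK₁γ]
      exact mul_lt_mul_of_pos_right hK₁K hγ0
    -- eventual facts
    have hev_div : ∀ᶠ n in atTop, A n / (n : ℝ) ^ s < 1 :=
      hdiv0.eventually_lt_const one_pos
    have hpa : Tendsto (fun n : ℕ => p n * A n - γ) atTop (𝓝 (c + bp - γ)) := by
      have := (hp1.mul hA).sub_const γ
      simpa using this
    have hev_g : ∀ᶠ n : ℕ in atTop,
        t * (n : ℝ) ^ (s - 1) * Real.exp (t / n) < p n * A n - γ :=
      hgl.eventually_lt hpa (by linarith)
    have hev_B : ∀ᶠ n in atTop, p n * B < K * γ := by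
      have : Tendsto (fun n : ℕ => p n * B) atTop (𝓝 (1 * B)) := hp1.mul_const B
      exact this.eventually_lt_const (by linarith)
    have hev : ∀ᶠ n in atTop, (n₀ ≤ n ∧ 1 ≤ n) ∧ A n / (n : ℝ) ^ s < 1 ∧
        (t * (n : ℝ) ^ (s - 1) * Real.exp (t / n) < p n * A n - γ) ∧ p n * B < K * γ := by
      filter_upwards [eventually_ge_atTop n₀, eventually_ge_atTop 1, hev_div, hev_g, hev_B]
        with n h1 h2 h3 h4 h5
      exact ⟨⟨h1, h2⟩, h3, h4, h5⟩
    obtain ⟨n₁, hn₁⟩ := eventually_atTop.1 hev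
    set S : ℕ → ℝ := fun n => ∑ j ∈ Finset.Ico n₁ n, 1 / (j : ℝ) ^ s with hSdef
    set M : ℝ := max ((n₁ : ℝ) ^ t * b n₁ - K) 0 with hM
    have hM0 : 0 ≤ M := le_max_right _ _
    -- main induction
    have main : ∀ n, n₁ ≤ n → (n : ℝ) ^ t * b n - K ≤ M * Real.exp (-γ * S n) := by
      intro n hn
      induction n, hn using Nat.le_induction with
      | base =>
        have hS0 : S n₁ = 0 := by rw [hSdef]; simp
        rw [hS0]
        simp only [mul_zero, Real.exp_zero, mul_one]
        exact le_max_left _ _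
      | succ n hn ih =>
        obtain ⟨⟨hn0', hn1⟩, h2, h3g, h4⟩ := hn₁ n hn
        have hnR : (0 : ℝ) < n := by exact_mod_cast hn1
        have hns : (0 : ℝ) < (n : ℝ) ^ s := Real.rpow_pos_of_pos hnR s
        have hnt : (0 : ℝ) < (n : ℝ) ^ t := Real.rpow_pos_of_pos hnR t
        set r : ℝ := p n * (1 - A n / (n : ℝ) ^ s) with hr
        have h3 : (n : ℝ) ^ s * (p n - 1) ≤ p n * A n - γ :=
          le_trans (hpt_bound n hn1) h3g.le
        have hp0 : 0 ≤ p n := by rw [hpdef]; positivity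
        have hr0 : 0 ≤ r := mul_nonneg hp0 (by linarith)
        have hr_le : r ≤ 1 - γ / (n : ℝ) ^ s := by
          rw [← sub_nonpos]
          have heq : r - (1 - γ / (n : ℝ) ^ s)
              = ((n : ℝ) ^ s * (p n - 1) - (p n * A n - γ)) / (n : ℝ) ^ s := by
            rw [hr]; field_simp; ring
          rw [heq]
          exact div_nonpos_of_nonpos_of_nonneg (by linarith) hns.le
        have hrec' := hrec n hn0'
        have hmul : ((n : ℝ) + 1) ^ t * b (n + 1)
            ≤ ((n : ℝ) + 1) ^ t * (b n * (1 - A n / (n : ℝ) ^ s) + B / (n : ℝ) ^ (s + t)) :=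
          mul_le_mul_of_nonneg_left hrec' (Real.rpow_nonneg (by positivity) t)
        have hpt_eq : ((n : ℝ) + 1) ^ t = p n * (n : ℝ) ^ t := by
          rw [hpdef]
          rw [← Real.mul_rpow (by positivity) hnR.le]
          congr 1
          field_simp
        have hst : (n : ℝ) ^ (s + t) = (n : ℝ) ^ s * (n : ℝ) ^ t := Real.rpow_add hnR s t
        have hexpand : ((n : ℝ) + 1) ^ t * (b n * (1 - A n / (n : ℝ) ^ s) + B / (n : ℝ) ^ (s + t))
            = r * ((n : ℝ) ^ t * b n) + p n * B / (n : ℝ) ^ s := by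
          rw [hpt_eq, hst, hr]
          field_simp
          try ring
        have hq : p n * B / (n : ℝ) ^ s ≤ K * γ / (n : ℝ) ^ s := by
          have := h4.le
          gcongr
        have hKr : K * γ / (n : ℝ) ^ s ≤ K * (1 - r) := by
          rw [mul_div_assoc]
          exact mul_le_mul_of_nonneg_left (by linarith) hK0.le
        have hstep : ((n : ℝ) + 1) ^ t * b (n + 1) - K ≤ ((n : ℝ) ^ t * b n - K) * r := by
          have hc1 : ((n : ℝ) + 1) ^ t * b (n + 1)
              ≤ r * ((n : ℝ) ^ t * b n) + p n * B / (n : ℝ) ^ s := hmul.trans_eq hexpand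
          have hc2 : r * ((n : ℝ) ^ t * b n) + K * (1 - r)
              = ((n : ℝ) ^ t * b n - K) * r + K := by ring
          linarith [hc2 ▸ (by linarith : ((n : ℝ) + 1) ^ t * b (n + 1)
            ≤ r * ((n : ℝ) ^ t * b n) + K * (1 - r))]
        have hEnn : 0 ≤ M * Real.exp (-γ * S n) :=
          mul_nonneg hM0 (Real.exp_pos _).le
        have h5 : ((n : ℝ) ^ t * b n - K) * r ≤ (M * Real.exp (-γ * S n)) * r :=
          mul_le_mul_of_nonneg_right ih hr0
        have hre : r ≤ Real.exp (-(γ / (n : ℝ) ^ s)) :=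
          le_trans hr_le (by linarith [Real.add_one_le_exp (-(γ / (n : ℝ) ^ s))])
        have h6 : (M * Real.exp (-γ * S n)) * r
            ≤ (M * Real.exp (-γ * S n)) * Real.exp (-(γ / (n : ℝ) ^ s)) :=
          mul_le_mul_of_nonneg_left hre hEnn
        have hSsucc : S (n + 1) = S n + 1 / (n : ℝ) ^ s := by
          rw [hSdef]
          exact Finset.sum_Ico_succ_top hn _
        have heq2 : M * Real.exp (-γ * S (n + 1))
            = (M * Real.exp (-γ * S n)) * Real.exp (-(γ / (n : ℝ) ^ s)) := by
          rw [hSsucc, show -γ * (S n + 1 / (n : ℝ) ^ s)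
            = -γ * S n + (-(γ / (n : ℝ) ^ s)) by ring, Real.exp_add]
          ring
        push_cast
        linarith
    -- divergence of the sum
    have hf0 : ∀ j : ℕ, 0 ≤ 1 / (j : ℝ) ^ s := fun j => by positivity
    have hnotsum : ¬ Summable (fun j : ℕ => 1 / (j : ℝ) ^ s) := fun h =>
      absurd (Real.summable_one_div_nat_rpow.1 h) (by linarith)
    have hT : Tendsto (fun n => ∑ j ∈ Finset.range n, 1 / (j : ℝ) ^ s) atTop atTop :=
      (not_summable_iff_tendsto_nat_atTop_of_nonneg hf0).1 hnotsum
    have hS : Tendsto S atTop atTop := by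
      apply Tendsto.congr' _ (tendsto_atTop_add_const_right atTop
        (-(∑ j ∈ Finset.range n₁, 1 / (j : ℝ) ^ s)) hT)
      filter_upwards [eventually_ge_atTop n₁] with n hn
      simp only [hSdef]
      rw [Finset.sum_Ico_eq_sub _ hn]
      ring
    have hE0 : Tendsto (fun n => M * Real.exp (-γ * S n)) atTop (𝓝 0) := by
      have h1 : Tendsto (fun n => -γ * S n) atTop atBot := by
        have h := tendsto_neg_atTop_atBot.comp (Filter.Tendsto.const_mul_atTop hγ0 hS)
        refine h.congr fun n => ?_
        simp [Function.comp, neg_mul]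
      have h2 : Tendsto (fun n => Real.exp (-γ * S n)) atTop (𝓝 0) :=
        Real.tendsto_exp_atBot.comp h1
      simpa using h2.const_mul M
    have hfin : ∀ᶠ n : ℕ in atTop, M * Real.exp (-γ * S n) < L - K :=
      hE0.eventually_lt_const (by linarith)
    filter_upwards [hfin, eventually_ge_atTop n₁] with n h1 h2
    linarith [main n h2]
  -- conclusion
  rw [Filter.limsup_eq]
  by_cases hbdd : BddBelow {a : ℝ | ∀ᶠ n : ℕ in atTop, (n : ℝ) ^ t * b n ≤ a}
  · exact le_of_forall_gt_imp_ge_of_dense fun L hL => csInf_le hbdd (key L hL)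
  · rw [Real.sInf_of_not_bddBelow hbdd]
    exact (div_pos hB hcpos).le
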